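/- Let h(t) = −t log₂ t − (1−t) log₂(1−t) and h₀(t) = h((1 − √(1−4t))/2) for t ∈ [0,1/4]. Then for every α ∈ (0,1), max_{k∈{0,1,2}} sup_{t∈(0,1/4]} |h₀^{(k)}(t)| t^{k−α} < ∞; in particular h₀ satisfies Condition 1 (with f = h₀) for every α ∈ (0,1). -/

import Mathlib

open MeasureTheory Filter Topology
open scoped ENNReal

noncomputable section

/-- The lattice `ℤ^d`. -/
abbrev Zd (d : ℕ) := Fin d → ℤ

/-- The Hilbert space `ℓ²(ℤ^d)`. -/
abbrev Hd (d : ℕ) := lp (fun _ : Zd d => ℂ) 2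

variable {d : ℕ}

/-- The max (sup) norm `‖x‖ = max_i |x_i|` on `ℤ^d`, as a natural number. -/
def natNorm (x : Zd d) : ℕ := Finset.univ.sup fun i => (x i).natAbs

/-- Distance between two subsets of `ℤ^d` (`0` by convention if one of them is empty). -/
def setDist (C₁ C₂ : Set (Zd d)) : ℕ :=
  sInf {n | ∃ x ∈ C₁, ∃ y ∈ C₂, natNorm (x - y) = n}

/-- Boundary `∂C = {x ∈ C : dist({x}, Cᶜ) = 1}`. -/
def bdry (C : Set (Zd d)) : Set (Zd d) := {x ∈ C | setDist {x} Cᶜ = 1}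

/-- The standard basis vector `δ_x` of `ℓ²(ℤ^d)`. -/
def delta (x : Zd d) : Hd d := lp.single 2 x (1 : ℂ)

/-- Matrix element `A(x,y) = ⟨δ_x, A δ_y⟩`. -/
def matElem (A : Hd d →L[ℂ] Hd d) (x y : Zd d) : ℂ :=
  @inner ℂ _ _ (delta x) (A (delta y))

lemma indicator_norm_le (C : Set (Zd d)) (f : Hd d) (i : Zd d) :
    ‖C.indicator ⇑f i‖ ≤ ‖(f : ∀ _ : Zd d, ℂ) i‖ := by
  by_cases hi : i ∈ C
  · simp [Set.indicator_of_mem hi]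
  · simp [Set.indicator_of_notMem hi]

lemma memℓp_indicator (C : Set (Zd d)) (f : Hd d) : Memℓp (C.indicator ⇑f) 2 := by
  refine memℓp_gen ?_
  have hf : Summable fun i => ‖(f : ∀ _ : Zd d, ℂ) i‖ ^ (2 : ℝ≥0∞).toReal :=
    (memℓp_gen_iff (by norm_num)).mp (lp.memℓp f)
  refine hf.of_nonneg_of_le (fun i => by positivity) fun i =>
    Real.rpow_le_rpow (norm_nonneg _) (indicator_norm_le C f i) (by norm_num)

/-- The multiplication operator by the indicator of `C ⊆ ℤ^d` (orthogonal projection onto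
`ℓ²(C)`). -/
def chi (C : Set (Zd d)) : Hd d →L[ℂ] Hd d :=
  LinearMap.mkContinuous
    { toFun := fun f => (⟨C.indicator ⇑f, memℓp_indicator C f⟩ : Hd d)
      map_add' := by
        intro f g
        refine lp.ext (funext fun x => ?_)
        change C.indicator (⇑(f + g)) x = C.indicator ⇑f x + C.indicator ⇑g x
        rw [lp.coeFn_add]
        by_cases hx : x ∈ C <;>
          simp [Set.indicator_of_mem, Set.indicator_of_notMem, hx]
      map_smul' := by
        intro c f
        refine lp.ext (funext fun x => ?_)
        change C.indicator (⇑(c • f)) x = c • C.indicator ⇑f x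
        rw [lp.coeFn_smul]
        by_cases hx : x ∈ C <;>
          simp [Set.indicator_of_mem, Set.indicator_of_notMem, hx] }
    1 (by
      intro f
      rw [one_mul]
      show ‖(⟨C.indicator ⇑f, memℓp_indicator C f⟩ : Hd d)‖ ≤ ‖f‖
      by_contra hcon
      push_neg at hcon
      have h2 : (0:ℝ) < (2 : ℝ≥0∞).toReal := by norm_num
      have hlt : ‖f‖ ^ (2 : ℝ≥0∞).toReal
          < ‖(⟨C.indicator ⇑f, memℓp_indicator C f⟩ : Hd d)‖ ^ (2 : ℝ≥0∞).toReal :=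
        Real.rpow_lt_rpow (norm_nonneg _) hcon h2
      have hle : ‖(⟨C.indicator ⇑f, memℓp_indicator C f⟩ : Hd d)‖ ^ (2 : ℝ≥0∞).toReal
          ≤ ‖f‖ ^ (2 : ℝ≥0∞).toReal := by
        rw [lp.norm_rpow_eq_tsum h2, lp.norm_rpow_eq_tsum h2 f]
        exact Summable.tsum_le_tsum
          (fun i => Real.rpow_le_rpow (norm_nonneg _) (indicator_norm_le C f i) h2.le)
          ((memℓp_gen_iff h2).mp (lp.memℓp _)) ((memℓp_gen_iff h2).mp (lp.memℓp f))
      exact absurd hle (not_le.mpr hlt))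

/-- `Π_{C₁,C₂} = χ_{C₁} P χ_{C₂} P χ_{C₁}`. -/
def PiOp (P : Hd d →L[ℂ] Hd d) (C₁ C₂ : Set (Zd d)) : Hd d →L[ℂ] Hd d :=
  chi C₁ ∘L P ∘L chi C₂ ∘L P ∘L chi C₁

/-- `Π_C = Π_{C,Cᶜ}`. -/
def PiC (P : Hd d →L[ℂ] Hd d) (C : Set (Zd d)) : Hd d →L[ℂ] Hd d := PiOp P C Cᶜ

/-- `A` is an orthogonal projection. -/
def IsOrthoProj (P : Hd d →L[ℂ] Hd d) : Prop := IsSelfAdjoint P ∧ P ∘L P = P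

/-- Trace of (the restriction to `ℓ²(C)` of) `A` over a subset `C ⊆ ℤ^d`:
`Σ_{x∈C} Re A(x,x)`. -/
def trSet (C : Set (Zd d)) (A : Hd d →L[ℂ] Hd d) : ℝ :=
  ∑' x : C, (matElem A x x).re

/-- `[0,∞]`-valued trace over a subset `C ⊆ ℤ^d`. -/
def trSetNN (C : Set (Zd d)) (A : Hd d →L[ℂ] Hd d) : ℝ≥0∞ :=
  ∑' x : C, ENNReal.ofReal (matElem A x x).re

/-- The cube `Λ_M = ([−M,M] ∩ ℤ)^d`. -/
def cube (d M : ℕ) : Set (Zd d) := {x | ∀ i, |x i| ≤ (M : ℤ)}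

/-- Condition 1 on the test function `f`, with exponent `α`. -/
def Condition1 (f : ℝ → ℝ) (α : ℝ) : Prop :=
  (0 < α ∧ α ≤ 1) ∧
  (∀ x : ℝ, x ∉ Set.Icc (0:ℝ) (1/4) → f x = 0) ∧
  ContDiffOn ℝ 2 f (Set.Ioc 0 (1/4)) ∧
  ∃ Cf : ℝ, ∀ k : ℕ, k ≤ 2 → ∀ x ∈ Set.Ioc (0:ℝ) (1/4),
    |iteratedDerivWithin k f (Set.Ioc 0 (1/4)) x| * x ^ ((k : ℝ) - α) ≤ Cf

/-- A measure preserving ergodic action of `ℤ^d` on a probability space. -/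
structure ErgAction (d : ℕ) {Ω : Type*} [MeasurableSpace Ω] (μ : Measure Ω)
    (T : Zd d → Ω → Ω) : Prop where
  measPres : ∀ a, MeasurePreserving (T a) μ μ
  base : T 0 = id
  add : ∀ a b, T (a + b) = T a ∘ T b
  ergodic : ∀ s : Set Ω, MeasurableSet s → (∀ a, T a ⁻¹' s = s) → μ s = 0 ∨ μ s = 1

/-- Assumption 1: `P(ω)` is an ergodic family of orthogonal projections with exponentially
decaying expected matrix elements. -/
structure Assumption1 (d : ℕ) {Ω : Type*} [MeasurableSpace Ω] (μ : Measure Ω)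
    (T : Zd d → Ω → Ω) (P : Ω → Hd d →L[ℂ] Hd d) (C₀ γ : ℝ) : Prop where
  act : ErgAction d μ T
  proj : ∀ᵐ ω ∂μ, IsOrthoProj (P ω)
  meas : ∀ x y, Measurable fun ω => matElem (P ω) x y
  covariant : ∀ a : Zd d, ∀ᵐ ω ∂μ, ∀ x y,
    matElem (P (T a ω)) x y = matElem (P ω) (x + a) (y + a)
  γpos : 0 < γ
  decay : ∀ x y, ∫ ω, ‖matElem (P ω) x y‖ ∂μ
    ≤ C₀ * Real.exp (-γ * natNorm (x - y))


/-- The half-space `ℤ^d_+ = ([0,∞) ∩ ℤ) × ℤ^{d-1}` (first coordinate nonnegative). -/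
def Zplus (d : ℕ) : Set (Zd d) := {x | ∀ i : Fin d, (i : ℕ) = 0 → 0 ≤ x i}

/-- The half-line `ℤ₋ = (−∞,0] ∩ ℤ`, inside `ℤ¹`. -/
def Zminus1 : Set (Zd 1) := {x | x 0 ≤ 0}

/-- The lattice point `j·e₁ ∈ ℤ^d`. -/
def axisPt (d : ℕ) (j : ℕ) : Zd d := fun i => if (i : ℕ) = 0 then (j : ℤ) else 0

/-- The face `F_M^{(i,s)}` of the cube `Λ_M` (`s = true` for the `+` face). -/
def face (d M : ℕ) (i : Fin d) (s : Bool) : Set (Zd d) :=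
  {x ∈ cube d M | x i = if s then (M : ℤ) else -(M : ℤ)}

/-- The truncated face `F̂_M^{(i,s)}` (points at distance `≥ 3ℓ` from all other faces). -/
def faceHat (d M ℓ : ℕ) (i : Fin d) (s : Bool) : Set (Zd d) :=
  {x ∈ face d M i s | ∀ j t, (j, t) ≠ (i, s) → 3 * ℓ ≤ setDist {x} (face d M j t)}

/-- The surface layer `B_M^{(i,s)}`, the `ℓ`-neighborhood of `F̂_M^{(i,s)}` inside `Λ_M`. -/
def layer (d M ℓ : ℕ) (i : Fin d) (s : Bool) : Set (Zd d) :=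
  {x ∈ cube d M | setDist {x} (faceHat d M ℓ i s) < ℓ}

/-- The lattice half-space `ℤ^d_{+,(i,s)}` containing `Λ_M` with `F_M^{(i,s)}` on its boundary. -/
def halfSp (d M : ℕ) (i : Fin d) (s : Bool) : Set (Zd d) :=
  {x | if s then x i ≤ (M : ℤ) else -(M : ℤ) ≤ x i}

/-- The error term `R_d(M) = (M^d e^{−αγℓ/2} + (d−1) ℓ² M^{d−2})²`. -/
def RdErr (d M ℓ : ℕ) (α γ : ℝ) : ℝ :=
  ((M : ℝ) ^ d * Real.exp (-(α * γ * ℓ) / 2)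
    + ((d : ℝ) - 1) * (ℓ : ℝ) ^ 2 * (M : ℝ) ^ (d - 2)) ^ 2


section St6Aux
open Set

def st6u (t : ℝ) : ℝ := Real.sqrt (1 - 4*t)
def st6s (t : ℝ) : ℝ := (1 - st6u t)/2
def st6g (t : ℝ) : ℝ := -(st6s t) * Real.logb 2 (st6s t) - (1 - st6s t) * Real.logb 2 (1 - st6s t)
def st6H (t : ℝ) : ℝ := if t ∈ Set.Icc (0:ℝ) (1/4) then st6g t else 0
def st6L (u : ℝ) : ℝ := Real.log (1 + u) - Real.log (1 - u)
def st6p1 (t : ℝ) : ℝ :=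
  if t = 1/4 then 2 / Real.log 2 else st6L (st6u t) / (st6u t * Real.log 2)
def st6p2 (t : ℝ) : ℝ :=
  if t = 1/4 then -(8/(3 * Real.log 2))
  else 2*(st6L (st6u t) - 2*st6u t/(1 - st6u t^2)) / (st6u t^3 * Real.log 2)

lemma st6u_nonneg (t : ℝ) : 0 ≤ st6u t := Real.sqrt_nonneg _

lemma st6u_sq {t : ℝ} (ht : t ≤ 1/4) : st6u t ^ 2 = 1 - 4*t :=
  Real.sq_sqrt (by linarith)

lemma st6u_lt_one {t : ℝ} (ht : 0 < t) : st6u t < 1 := by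
  rw [st6u, Real.sqrt_lt' one_pos]; nlinarith

lemma st6u_pos {t : ℝ} (ht : t < 1/4) : 0 < st6u t :=
  Real.sqrt_pos.mpr (by linarith)

lemma st6s_pos {t : ℝ} (ht : 0 < t) : 0 < st6s t := by
  have := st6u_lt_one ht; rw [st6s]; linarith

lemma st6s_le_half (t : ℝ) : st6s t ≤ 1/2 := by
  have := st6u_nonneg t; rw [st6s]; linarith

lemma st6s_mul {t : ℝ} (ht : t ≤ 1/4) : st6s t * (1 - st6s t) = t := by
  have h := st6u_sq ht; rw [st6s]; nlinarith

lemma st6s_le_two_t {t : ℝ} (ht : t ∈ Set.Ioc (0:ℝ) (1/4)) : st6s t ≤ 2*t := by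
  have h := st6s_mul ht.2
  have h2 := st6s_le_half t
  have h3 := (st6s_pos ht.1).le
  nlinarith [mul_nonneg h3 h3]

lemma st6s_ge_t {t : ℝ} (ht : t ∈ Set.Ioc (0:ℝ) (1/4)) : t ≤ st6s t := by
  have h := st6s_mul ht.2
  have h2 := st6s_le_half t
  have h3 := st6s_pos ht.1
  nlinarith

lemma one_sub_u_ge {t : ℝ} (ht : t ∈ Set.Ioc (0:ℝ) (1/4)) : 2*t ≤ 1 - st6u t := by
  have := st6s_ge_t ht; rw [st6s] at this; linarith

lemma log2_pos : (0:ℝ) < Real.log 2 := Real.log_pos (by norm_num)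

/-- derivative of L -/
lemma st6L_hasDerivAt {u : ℝ} (h1 : -1 < u) (h2 : u < 1) :
    HasDerivAt st6L (2/(1-u^2)) u := by
  have e1 : HasDerivAt (fun u : ℝ => Real.log (1 + u)) (1/(1+u)) u := by
    have := (Real.hasDerivAt_log (by linarith : (1:ℝ) + u ≠ 0)).comp u
      ((hasDerivAt_const u (1:ℝ)).add (hasDerivAt_id u))
    exact this.congr_deriv (by simp)
  have e2 : HasDerivAt (fun u : ℝ => Real.log (1 - u)) (-(1/(1-u))) u := by
    have := (Real.hasDerivAt_log (by linarith : (1:ℝ) - u ≠ 0)).comp u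
      ((hasDerivAt_const u (1:ℝ)).sub (hasDerivAt_id u))
    have h := this
    refine h.congr_deriv ?_
    ring
  have := e1.sub e2
  refine this.congr_deriv ?_
  have hn1 : (1:ℝ) + u ≠ 0 := by linarith
  have hn2 : (1:ℝ) - u ≠ 0 := by linarith
  have hn3 : (1:ℝ) - u^2 ≠ 0 := by nlinarith
  field_simp
  ring

lemma st6L_zero : st6L 0 = 0 := by simp [st6L]

/-- I1 : 2u ≤ L u on [0,1) -/
lemma st6L_ge {u : ℝ} (h0 : 0 ≤ u) (h1 : u < 1) : 2*u ≤ st6L u := by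
  have key : ∀ x ∈ Set.Ioo (-1:ℝ) 1, HasDerivAt (fun x => st6L x - 2*x)
      (2/(1-x^2) - 2) x := by
    intro x hx
    have := (st6L_hasDerivAt hx.1 hx.2).sub (((hasDerivAt_id x)).const_mul 2)
    exact this.congr_deriv (by ring)
  have mono : MonotoneOn (fun x => st6L x - 2*x) (Set.Ico (0:ℝ) 1) := by
    apply monotoneOn_of_deriv_nonneg (convex_Ico 0 1)
    · intro x hx
      exact (key x ⟨by linarith [hx.1], hx.2⟩).continuousAt.continuousWithinAt
    · intro x hx
      rw [interior_Ico] at hx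
      exact (key x ⟨by linarith [hx.1], hx.2⟩).differentiableAt.differentiableWithinAt
    · intro x hx
      rw [interior_Ico] at hx
      rw [(key x ⟨by linarith [hx.1], hx.2⟩).deriv]
      have hx2 : 0 < 1 - x^2 := by nlinarith [hx.1, hx.2]
      have e : 2/(1-x^2) - 2 = 2*x^2/(1-x^2) := by field_simp; ring
      rw [e]; positivity
  have h := mono (Set.left_mem_Ico.2 one_pos) ⟨h0, h1⟩ h0
  simp only [st6L_zero] at h
  linarith

/-- I2 : L u ≤ 2u/(1-u²) on [0,1) -/
lemma st6L_le {u : ℝ} (h0 : 0 ≤ u) (h1 : u < 1) : st6L u ≤ 2*u/(1-u^2) := by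
  have mono : MonotoneOn (fun x => 2*x/(1-x^2) - st6L x) (Set.Ico (0:ℝ) 1) := by
    have key : ∀ x ∈ Set.Ioo (-1:ℝ) 1, HasDerivAt (fun x => 2*x/(1-x^2) - st6L x)
        ((2*(1-x^2) - 2*x*(-2*x))/(1-x^2)^2 - 2/(1-x^2)) x := by
      intro x hx
      have hne : (1:ℝ) - x^2 ≠ 0 := by nlinarith [hx.1, hx.2]
      exact (((hasDerivAt_id x).const_mul 2).div
        (((hasDerivAt_pow 2 x).const_sub 1)) (by simpa using hne) |>.congr_deriv
          (by norm_num)).sub (st6L_hasDerivAt hx.1 hx.2)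
    apply monotoneOn_of_deriv_nonneg (convex_Ico 0 1)
    · intro x hx
      exact (key x ⟨by linarith [hx.1], hx.2⟩).continuousAt.continuousWithinAt
    · intro x hx
      rw [interior_Ico] at hx
      exact (key x ⟨by linarith [hx.1], hx.2⟩).differentiableAt.differentiableWithinAt
    · intro x hx
      rw [interior_Ico] at hx
      rw [(key x ⟨by linarith [hx.1], hx.2⟩).deriv]
      have hx2 : 0 < 1 - x^2 := by nlinarith [hx.1, hx.2]
      have : (2*(1-x^2) - 2*x*(-2*x))/(1-x^2)^2 - 2/(1-x^2) = 4*x^2/(1-x^2)^2 := by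
        field_simp; ring
      rw [this]; positivity
  have h := mono (Set.left_mem_Ico.2 one_pos) ⟨h0, h1⟩ h0
  simp only [st6L_zero] at h
  norm_num at h
  linarith


lemma st6u_hasDerivAt {t : ℝ} (ht : t < 1/4) :
    HasDerivAt st6u (-2 / st6u t) t := by
  have h4 : (0:ℝ) < 1 - 4*t := by linarith
  have := (Real.hasDerivAt_sqrt (ne_of_gt h4)).comp t
    (((hasDerivAt_id t).const_mul 4).const_sub 1)
  refine this.congr_deriv ?_
  have : Real.sqrt (1 - 4*t) ≠ 0 := ne_of_gt (st6u_pos ht)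
  unfold st6u
  field_simp
  ring

lemma st6u_cont : Continuous st6u := by
  exact Real.continuous_sqrt.comp (by continuity)

lemma st6s_hasDerivAt {t : ℝ} (ht : t < 1/4) :
    HasDerivAt st6s (1 / st6u t) t := by
  have := ((st6u_hasDerivAt ht).const_sub 1).div_const 2
  refine this.congr_deriv ?_
  have : st6u t ≠ 0 := ne_of_gt (st6u_pos ht)
  field_simp

lemma st6s_one_sub {t : ℝ} : 1 - st6s t = (1 + st6u t)/2 := by
  rw [st6s]; ring

/-- derivative of x ↦ -x log₂ x - (1-x) log₂ (1-x)  -/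
lemma st6h_hasDerivAt {x : ℝ} (h0 : 0 < x) (h1 : x < 1) :
    HasDerivAt (fun x : ℝ => -x * Real.logb 2 x - (1 - x) * Real.logb 2 (1 - x))
      ((Real.log (1 - x) - Real.log x) / Real.log 2) x := by
  have e1 : HasDerivAt (fun x : ℝ => x * Real.log x) (Real.log x + 1) x :=
    Real.hasDerivAt_mul_log (ne_of_gt h0)
  have e2 : HasDerivAt (fun x : ℝ => (1 - x) * Real.log (1 - x))
      (-(Real.log (1 - x) + 1)) x := by
    have := (Real.hasDerivAt_mul_log (by linarith : (1:ℝ) - x ≠ 0)).comp x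
      ((hasDerivAt_id x).const_sub 1)
    refine this.congr_deriv ?_
    ring
  have e3 := ((e1.add e2).div_const (Real.log 2)).neg
  have heq : (fun x : ℝ => -x * Real.logb 2 x - (1 - x) * Real.logb 2 (1 - x))
      = (fun x : ℝ => -((x * Real.log x + (1 - x) * Real.log (1 - x)) / Real.log 2)) := by
    funext y
    rw [Real.logb, Real.logb]
    field_simp
    ring
  rw [heq]
  refine e3.congr_deriv ?_
  field_simp
  ring

lemma st6g_eq_st6p1 {t : ℝ} (ht : t ∈ Set.Ioo (0:ℝ) (1/4)) :
    (Real.log (1 - st6s t) - Real.log (st6s t)) / Real.log 2 * (1 / st6u t) = st6p1 t := by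
  have hu0 := st6u_pos ht.2
  have hu1 := st6u_lt_one ht.1
  have hs0 := st6s_pos ht.1
  have hL2 : Real.log 2 ≠ 0 := ne_of_gt log2_pos
  rw [st6p1, if_neg (ne_of_lt ht.2), st6s_one_sub, st6s, st6L]
  rw [Real.log_div (by linarith) two_ne_zero, Real.log_div (by linarith) two_ne_zero]
  field_simp
  try ring
  try exact Or.inl trivial

lemma st6g_hasDerivAt {t : ℝ} (ht : t ∈ Set.Ioo (0:ℝ) (1/4)) :
    HasDerivAt st6g (st6p1 t) t := by
  have hu0 := st6u_pos ht.2
  have hu1 := st6u_lt_one ht.1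
  have hs0 := st6s_pos ht.1
  have hs1 : st6s t < 1 := lt_of_le_of_lt (st6s_le_half t) (by norm_num)
  have comp := (st6h_hasDerivAt hs0 hs1).comp t (st6s_hasDerivAt ht.2)
  have heq : st6g = (fun x : ℝ => -x * Real.logb 2 x - (1 - x) * Real.logb 2 (1 - x)) ∘ st6s := by
    funext y; rfl
  rw [heq]
  refine comp.congr_deriv ?_
  rw [← st6g_eq_st6p1 ht]

lemma quarter_mem : (1/4 : ℝ) ∈ Set.Icc (0:ℝ) (1/4) := by norm_num

lemma st6H_eq_g {x : ℝ} (hx : x ∈ Set.Icc (0:ℝ) (1/4)) : st6H x = st6g x := if_pos hx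

lemma st6H_eventuallyEq {t : ℝ} (ht : t ∈ Set.Ioo (0:ℝ) (1/4)) : st6H =ᶠ[𝓝 t] st6g :=
  Filter.eventuallyEq_of_mem (isOpen_Ioo.mem_nhds ht)
    (fun x hx => st6H_eq_g ⟨le_of_lt hx.1, le_of_lt hx.2⟩)

lemma st6H_hasDerivAt {t : ℝ} (ht : t ∈ Set.Ioo (0:ℝ) (1/4)) :
    HasDerivAt st6H (st6p1 t) t :=
  (st6g_hasDerivAt ht).congr_of_eventuallyEq (st6H_eventuallyEq ht)

lemma st6p1_eventuallyEq {t : ℝ} (ht : t ∈ Set.Ioo (0:ℝ) (1/4)) :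
    st6p1 =ᶠ[𝓝 t] fun x => st6L (st6u x) / (st6u x * Real.log 2) :=
  Filter.eventuallyEq_of_mem (isOpen_Ioo.mem_nhds ht)
    (fun x hx => if_neg (ne_of_lt hx.2))

lemma st6p1_hasDerivAt {t : ℝ} (ht : t ∈ Set.Ioo (0:ℝ) (1/4)) :
    HasDerivAt st6p1 (st6p2 t) t := by
  have hu0 := st6u_pos ht.2
  have hu1 := st6u_lt_one ht.1
  have hu2 : (1:ℝ) - st6u t ^ 2 ≠ 0 := by nlinarith
  have hL2 : Real.log 2 ≠ 0 := ne_of_gt log2_pos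
  have D1 : HasDerivAt (fun x => st6L (st6u x)) (2/(1 - st6u t^2) * (-2 / st6u t)) t :=
    (st6L_hasDerivAt (by linarith) hu1).comp t (st6u_hasDerivAt ht.2)
  have D2 : HasDerivAt (fun x => (st6u x * Real.log 2)⁻¹)
      (-(-2 / st6u t * Real.log 2) / (st6u t * Real.log 2)^2) t :=
    ((st6u_hasDerivAt ht.2).mul_const (Real.log 2)).inv
      (by positivity)
  have D := D1.mul D2
  refine HasDerivAt.congr_of_eventuallyEq ?_
    ((st6p1_eventuallyEq ht).trans (by filter_upwards with x; rw [div_eq_mul_inv]))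
  refine D.congr_deriv ?_
  rw [st6p2, if_neg (ne_of_lt ht.2), st6L]
  field_simp
  ring

lemma lim_L_div : Tendsto (fun u => st6L u / u) (𝓝[>] (0:ℝ)) (𝓝 2) := by
  have h := (st6L_hasDerivAt (by norm_num : (-1:ℝ) < 0) one_pos)
  rw [show (2 : ℝ)/(1-(0:ℝ)^2) = 2 by norm_num] at h
  have := hasDerivAt_iff_tendsto_slope.mp h
  have h2 : Tendsto (slope st6L 0) (𝓝[>] (0:ℝ)) (𝓝 2) :=
    this.mono_left (nhdsWithin_mono _ (fun x hx => ne_of_gt hx))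
  refine h2.congr (fun u => ?_)
  rw [slope_def_field, st6L_zero]
  norm_num

lemma tendsto_st6u : Tendsto st6u (𝓝[<] (1/4:ℝ)) (𝓝[>] 0) := by
  rw [tendsto_nhdsWithin_iff]
  constructor
  · have : st6u (1/4) = 0 := by
      rw [st6u]; norm_num
    have hc := st6u_cont.continuousAt (x := (1/4:ℝ))
    rw [ContinuousAt, this] at hc
    exact hc.mono_left nhdsWithin_le_nhds
  · filter_upwards [self_mem_nhdsWithin] with x hx
    exact st6u_pos hx

lemma lim_p1 : Tendsto st6p1 (𝓝[<] (1/4:ℝ)) (𝓝 (2 / Real.log 2)) := by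
  have base : Tendsto (fun u => st6L u / u / Real.log 2) (𝓝[>] (0:ℝ)) (𝓝 (2 / Real.log 2)) :=
    lim_L_div.div_const _
  have comp := base.comp tendsto_st6u
  refine comp.congr' ?_
  filter_upwards [Ioo_mem_nhdsLT_of_mem (by norm_num : (1/4:ℝ) ∈ Set.Ioc (3/16) (1/4))]
    with x hx
  rw [Function.comp, st6p1, if_neg (ne_of_lt hx.2), div_div]

lemma lim_quot_deriv : ∀ x ∈ Set.Ioo (-1:ℝ) 1, HasDerivAt (fun u : ℝ => st6L u - 2*u/(1-u^2))
    (-(4*x^2/(1-x^2)^2)) x := by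
  intro x hx
  have hne : (1:ℝ) - x^2 ≠ 0 := by nlinarith [hx.1, hx.2]
  have d1 := st6L_hasDerivAt hx.1 hx.2
  have d2 : HasDerivAt (fun u : ℝ => 2*u/(1-u^2))
      ((2*(1-x^2) - 2*x*(-(2*x)))/(1-x^2)^2) x := by
    have := (((hasDerivAt_id x).const_mul 2).div
      (((hasDerivAt_pow 2 x).const_sub 1)) (by simpa using hne))
    refine this.congr_deriv ?_
    norm_num
  have := d1.sub d2
  refine this.congr_deriv ?_
  field_simp
  ring

lemma lim_quot : Tendsto (fun u : ℝ => (st6L u - 2*u/(1-u^2)) / u^3) (𝓝[>] (0:ℝ))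
    (𝓝 (-(4/3))) := by
  apply HasDerivAt.lhopital_zero_right_on_Ioo one_pos
    (f' := fun x => -(4*x^2/(1-x^2)^2)) (g' := fun x => 3*x^2)
    (fun x hx => lim_quot_deriv x ⟨by linarith [hx.1], hx.2⟩)
    (fun x _ => by simpa using hasDerivAt_pow 3 x)
  · intro x hx
    have : (0:ℝ) < x := hx.1
    positivity
  · have hc := (lim_quot_deriv 0 (by norm_num)).continuousAt
    have := hc.tendsto.mono_left (nhdsWithin_le_nhds (s := Set.Ioi (0:ℝ)))
    simpa [st6L_zero] using this
  · have : Tendsto (fun u : ℝ => u^3) (𝓝 0) (𝓝 ((0:ℝ)^3)) :=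
      (continuous_pow 3).tendsto 0
    have := this.mono_left (nhdsWithin_le_nhds (s := Set.Ioi (0:ℝ)))
    simpa using this
  · have hc : ContinuousAt (fun x : ℝ => -(4/(3*(1-x^2)^2))) 0 := by
      apply ContinuousAt.neg
      apply ContinuousAt.div continuousAt_const
      · fun_prop
      · norm_num
    have h0 : Tendsto (fun x : ℝ => -(4/(3*(1-x^2)^2))) (𝓝[>] (0:ℝ)) (𝓝 (-(4/3))) := by
      have := hc.tendsto.mono_left (nhdsWithin_le_nhds (s := Set.Ioi (0:ℝ)))
      simpa using this
    refine h0.congr' ?_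
    filter_upwards [Ioo_mem_nhdsGT_of_mem (Set.left_mem_Ico.2 one_pos)] with x hx
    have hxne : x ≠ 0 := ne_of_gt hx.1
    have hne : (1:ℝ) - x^2 ≠ 0 := by nlinarith [hx.1, hx.2]
    field_simp

lemma lim_p2 : Tendsto st6p2 (𝓝[<] (1/4:ℝ)) (𝓝 (-(8/(3 * Real.log 2)))) := by
  have base : Tendsto (fun u : ℝ => 2 * ((st6L u - 2*u/(1-u^2)) / u^3) / Real.log 2)
      (𝓝[>] (0:ℝ)) (𝓝 (2 * (-(4/3)) / Real.log 2)) :=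
    (lim_quot.const_mul 2).div_const _
  have comp := base.comp tendsto_st6u
  have hval : 2 * (-(4/3) : ℝ) / Real.log 2 = -(8/(3 * Real.log 2)) := by
    field_simp
    ring
  rw [hval] at comp
  refine comp.congr' ?_
  filter_upwards [Ioo_mem_nhdsLT_of_mem (by norm_num : (1/4:ℝ) ∈ Set.Ioc (3/16) (1/4))]
    with x hx
  rw [Function.comp, st6p2, if_neg (ne_of_lt hx.2)]
  rw [mul_div_assoc, div_div, mul_div_assoc]
  rw [mul_div_assoc]

lemma deriv_st6p1_eq {t : ℝ} (ht : t ∈ Set.Ioo (0:ℝ) (1/4)) :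
    deriv st6p1 t = st6p2 t := (st6p1_hasDerivAt ht).deriv

lemma lim_deriv_p1 : Tendsto (deriv st6p1) (𝓝[<] (1/4:ℝ)) (𝓝 (-(8/(3 * Real.log 2)))) := by
  refine lim_p2.congr' ?_
  filter_upwards [Ioo_mem_nhdsLT_of_mem (by norm_num : (1/4:ℝ) ∈ Set.Ioc 0 (1/4))]
    with x hx
  exact (deriv_st6p1_eq hx).symm

lemma deriv_st6H_eq {t : ℝ} (ht : t ∈ Set.Ioo (0:ℝ) (1/4)) :
    deriv st6H t = st6p1 t := (st6H_hasDerivAt ht).deriv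

lemma lim_deriv_H : Tendsto (deriv st6H) (𝓝[<] (1/4:ℝ)) (𝓝 (2 / Real.log 2)) := by
  refine lim_p1.congr' ?_
  filter_upwards [Ioo_mem_nhdsLT_of_mem (by norm_num : (1/4:ℝ) ∈ Set.Ioc 0 (1/4))]
    with x hx
  exact (deriv_st6H_eq hx).symm

lemma st6s_cont : Continuous st6s := by
  unfold st6s
  exact (continuous_const.sub st6u_cont).div_const 2

lemma st6s_quarter : st6s (1/4 : ℝ) = 1/2 := by
  unfold st6s st6u; norm_num

lemma st6g_contAt_quarter : ContinuousAt st6g (1/4 : ℝ) := by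
  have hs : ContinuousAt st6s (1/4 : ℝ) := st6s_cont.continuousAt
  have hlogb : ∀ y : ℝ, y ≠ 0 → ContinuousAt (Real.logb 2) y := fun y hy =>
    (Real.continuousAt_log hy).div_const _
  unfold st6g
  have h1 : ContinuousAt (fun t => Real.logb 2 (st6s t)) (1/4:ℝ) := by
    refine ContinuousAt.comp (g := Real.logb 2) ?_ hs
    rw [st6s_quarter]
    exact hlogb _ (by norm_num)
  have h2 : ContinuousAt (fun t => Real.logb 2 (1 - st6s t)) (1/4:ℝ) := by
    refine ContinuousAt.comp (g := Real.logb 2) ?_ (continuousAt_const.sub hs)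
    rw [st6s_quarter]
    exact hlogb _ (by norm_num)
  exact (hs.neg.mul h1).sub ((continuousAt_const.sub hs).mul h2)

/-- endpoint derivative of st6H -/
lemma st6H_hasDerivWithinAt_quarter :
    HasDerivWithinAt st6H (2 / Real.log 2) (Set.Iic (1/4:ℝ)) (1/4 : ℝ) := by
  apply hasDerivWithinAt_Iic_of_tendsto_deriv (s := Set.Ioo (3/16 : ℝ) (1/4))
  · intro x hx
    exact (st6H_hasDerivAt ⟨by linarith [hx.1], hx.2⟩).differentiableAt.differentiableWithinAt
  · have hg : ContinuousWithinAt st6g (Set.Ioo (3/16 : ℝ) (1/4)) (1/4:ℝ) :=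
      st6g_contAt_quarter.continuousWithinAt
    refine hg.congr (fun y hy => st6H_eq_g ⟨by linarith [hy.1], le_of_lt hy.2⟩)
      (st6H_eq_g quarter_mem)
  · exact Ioo_mem_nhdsLT_of_mem (by norm_num : (1/4:ℝ) ∈ Set.Ioc (3/16) (1/4))
  · exact lim_deriv_H

lemma st6p1_quarter : st6p1 (1/4:ℝ) = 2 / Real.log 2 := if_pos rfl
lemma st6p2_quarter : st6p2 (1/4:ℝ) = -(8/(3 * Real.log 2)) := if_pos rfl

lemma st6p1_hasDerivWithinAt_quarter :
    HasDerivWithinAt st6p1 (-(8/(3 * Real.log 2))) (Set.Iic (1/4:ℝ)) (1/4 : ℝ) := by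
  apply hasDerivWithinAt_Iic_of_tendsto_deriv (s := Set.Ioo (3/16 : ℝ) (1/4))
  · intro x hx
    exact (st6p1_hasDerivAt ⟨by linarith [hx.1], hx.2⟩).differentiableAt.differentiableWithinAt
  · rw [ContinuousWithinAt, st6p1_quarter]
    exact lim_p1.mono_left (nhdsWithin_mono _ Set.Ioo_subset_Iio_self)
  · exact Ioo_mem_nhdsLT_of_mem (by norm_num : (1/4:ℝ) ∈ Set.Ioc (3/16) (1/4))
  · exact lim_deriv_p1

lemma uds : UniqueDiffOn ℝ (Set.Ioc (0:ℝ) (1/4)) := uniqueDiffOn_Ioc 0 (1/4)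

lemma derivWithin_st6H {t : ℝ} (ht : t ∈ Set.Ioc (0:ℝ) (1/4)) :
    derivWithin st6H (Set.Ioc (0:ℝ) (1/4)) t = st6p1 t := by
  rcases eq_or_lt_of_le ht.2 with heq | hlt
  · rw [heq, st6p1_quarter]
    exact ((st6H_hasDerivWithinAt_quarter.mono Set.Ioc_subset_Iic_self).derivWithin
      (uds _ (heq ▸ ht)))
  · exact (st6H_hasDerivAt ⟨ht.1, hlt⟩).hasDerivWithinAt.derivWithin (uds t ht)

lemma derivWithin_st6p1 {t : ℝ} (ht : t ∈ Set.Ioc (0:ℝ) (1/4)) :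
    derivWithin st6p1 (Set.Ioc (0:ℝ) (1/4)) t = st6p2 t := by
  rcases eq_or_lt_of_le ht.2 with heq | hlt
  · rw [heq, st6p2_quarter]
    exact ((st6p1_hasDerivWithinAt_quarter.mono Set.Ioc_subset_Iic_self).derivWithin
      (uds _ (heq ▸ ht)))
  · exact (st6p1_hasDerivAt ⟨ht.1, hlt⟩).hasDerivWithinAt.derivWithin (uds t ht)

lemma diffOn_st6H : DifferentiableOn ℝ st6H (Set.Ioc (0:ℝ) (1/4)) := by
  intro t ht
  rcases eq_or_lt_of_le ht.2 with heq | hlt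
  · rw [heq]
    exact (st6H_hasDerivWithinAt_quarter.mono Set.Ioc_subset_Iic_self).differentiableWithinAt
  · exact (st6H_hasDerivAt ⟨ht.1, hlt⟩).differentiableAt.differentiableWithinAt

lemma diffOn_st6p1 : DifferentiableOn ℝ st6p1 (Set.Ioc (0:ℝ) (1/4)) := by
  intro t ht
  rcases eq_or_lt_of_le ht.2 with heq | hlt
  · rw [heq]
    exact (st6p1_hasDerivWithinAt_quarter.mono Set.Ioc_subset_Iic_self).differentiableWithinAt
  · exact (st6p1_hasDerivAt ⟨ht.1, hlt⟩).differentiableAt.differentiableWithinAt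

lemma contOn_st6p2 : ContinuousOn st6p2 (Set.Ioc (0:ℝ) (1/4)) := by
  intro t ht
  rcases eq_or_lt_of_le ht.2 with heq | hlt
  · rw [heq]
    rw [← continuousWithinAt_diff_self, ContinuousWithinAt]
    rw [show st6p2 (1/4:ℝ) = -(8/(3 * Real.log 2)) from st6p2_quarter]
    refine lim_p2.mono_left (nhdsWithin_mono _ ?_)
    intro x hx
    exact lt_of_le_of_ne hx.1.2 (by simpa using hx.2)
  · -- interior: continuousAt of the explicit formula
    have hu0 := st6u_pos hlt
    have hu1 := st6u_lt_one ht.1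
    have hform : ContinuousAt (fun x =>
        2*(st6L (st6u x) - 2*st6u x/(1 - st6u x^2)) / (st6u x^3 * Real.log 2)) t := by
      have hcL : ContinuousAt (fun x => st6L (st6u x)) t := by
        refine ContinuousAt.comp (g := st6L) ?_ st6u_cont.continuousAt
        unfold st6L
        refine ContinuousAt.sub ?_ ?_
        · refine ContinuousAt.comp (g := Real.log) ?_
            (continuous_const.add continuous_id).continuousAt
          exact Real.continuousAt_log (by intro h; linarith)
        · refine ContinuousAt.comp (g := Real.log) ?_
            (continuous_const.sub continuous_id).continuousAt
          exact Real.continuousAt_log (by intro h; linarith)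
      have h2 : ContinuousAt (fun x => 2*st6u x/(1 - st6u x^2)) t := by
        apply ContinuousAt.div
        · exact (st6u_cont.continuousAt).const_mul 2
        · exact continuous_const.continuousAt.sub ((st6u_cont.pow 2).continuousAt)
        · nlinarith
      apply ContinuousAt.div
      · exact (hcL.sub h2).const_mul 2
      · exact ((st6u_cont.pow 3).continuousAt).mul continuousAt_const
      · have := log2_pos; positivity
    have : st6p2 =ᶠ[𝓝 t] fun x =>
        2*(st6L (st6u x) - 2*st6u x/(1 - st6u x^2)) / (st6u x^3 * Real.log 2) :=
      Filter.eventuallyEq_of_mem (Iio_mem_nhds hlt) (fun x hx => if_neg (ne_of_lt hx))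
    exact (hform.congr this.symm).continuousWithinAt

lemma contDiffOn_st6p1_one : ContDiffOn ℝ 1 st6p1 (Set.Ioc (0:ℝ) (1/4)) := by
  rw [show (1 : WithTop ℕ∞) = 0 + 1 by norm_num, contDiffOn_succ_iff_derivWithin uds]
  refine ⟨diffOn_st6p1, by simp, ?_⟩
  rw [contDiffOn_zero]
  exact contOn_st6p2.congr (fun x hx => derivWithin_st6p1 hx)

lemma contDiffOn_st6H : ContDiffOn ℝ 2 st6H (Set.Ioc (0:ℝ) (1/4)) := by
  rw [show (2 : WithTop ℕ∞) = 1 + 1 by norm_num, contDiffOn_succ_iff_derivWithin uds]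
  refine ⟨diffOn_st6H, by simp, ?_⟩
  exact contDiffOn_st6p1_one.congr (fun x hx => derivWithin_st6H hx)

lemma iter1_st6H {t : ℝ} (ht : t ∈ Set.Ioc (0:ℝ) (1/4)) :
    iteratedDerivWithin 1 st6H (Set.Ioc (0:ℝ) (1/4)) t = st6p1 t := by
  rw [iteratedDerivWithin_one]
  exact derivWithin_st6H ht

lemma iter2_st6H {t : ℝ} (ht : t ∈ Set.Ioc (0:ℝ) (1/4)) :
    iteratedDerivWithin 2 st6H (Set.Ioc (0:ℝ) (1/4)) t = st6p2 t := by
  show iteratedDerivWithin (1+1) st6H (Set.Ioc (0:ℝ) (1/4)) t = st6p2 t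
  rw [iteratedDerivWithin_succ]
  rw [derivWithin_congr (fun y hy => iter1_st6H hy) (iter1_st6H ht)]
  exact derivWithin_st6p1 ht

lemma neg_log_le {s β : ℝ} (hs : 0 < s) (hβ : 0 < β) : -Real.log s ≤ s^(-β)/β := by
  rw [← Real.log_inv]
  have h2 : Real.log (s⁻¹) = (Real.log ((s⁻¹) ^ β))/β := by
    rw [Real.log_rpow (inv_pos.mpr hs)]
    field_simp
  rw [h2]
  have h3 : Real.log ((s⁻¹)^β) ≤ (s⁻¹)^β :=
    le_trans (Real.log_le_sub_one_of_pos (by positivity)) (by linarith)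
  have h4 : (s⁻¹)^β = s^(-β) := by
    rw [Real.rpow_neg hs.le, ← Real.inv_rpow hs.le]
  rw [← h4]
  exact div_le_div_of_nonneg_right h3 hβ.le |>.trans_eq rfl

lemma neg_log_one_sub_le {x : ℝ} (h0 : 0 < x) (h1 : x ≤ 1/2) : -Real.log (1-x) ≤ 2*x := by
  have he : 1 + 2*x ≤ Real.exp (2*x) := by
    have := Real.add_one_le_exp (2*x); linarith
  have hkey : Real.exp (-(2*x)) ≤ 1 - x := by
    rw [Real.exp_neg]
    have hp : (0:ℝ) < 1 + 2*x := by linarith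
    calc (Real.exp (2*x))⁻¹ ≤ (1+2*x)⁻¹ := by
          exact inv_anti₀ hp he
      _ ≤ 1 - x := by
          rw [inv_le_iff_one_le_mul₀ hp]  -- name guess
          nlinarith
  have := Real.log_le_log (Real.exp_pos _) hkey
  rw [Real.log_exp] at this
  linarith

lemma bound_st6g {α t : ℝ} (hα : α ∈ Set.Ioo (0:ℝ) 1) (ht : t ∈ Set.Ioc (0:ℝ) (1/4)) :
    |st6g t| ≤ 6/(1-α) / Real.log 2 * t ^ α := by
  have hs0 := st6s_pos ht.1
  have hs2 := st6s_le_half t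
  have hl2 := log2_pos
  have h1α : 0 < 1 - α := by linarith [hα.2]
  have hlogs : Real.log (st6s t) < 0 := Real.log_neg hs0 (by linarith)
  have hlog1s : Real.log (1 - st6s t) ≤ 0 := Real.log_nonpos (by linarith) (by linarith)
  have hgeq : st6g t = (st6s t * (-Real.log (st6s t))
      + (1 - st6s t) * (-Real.log (1 - st6s t))) / Real.log 2 := by
    rw [st6g, Real.logb, Real.logb]
    field_simp
    ring
  have hnn : 0 ≤ st6g t := by
    rw [hgeq]
    apply div_nonneg _ hl2.le
    have : 0 ≤ st6s t * (-Real.log (st6s t)) := by nlinarith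
    nlinarith
  -- term bounds
  have hA : st6s t * (-Real.log (st6s t)) ≤ (st6s t)^α / (1-α) := by
    have h1 := neg_log_le hs0 h1α
    have h2 : st6s t * (-Real.log (st6s t)) ≤ st6s t * ((st6s t)^(-(1-α))/(1-α)) :=
      mul_le_mul_of_nonneg_left h1 hs0.le
    refine h2.trans_eq ?_
    rw [mul_div_assoc']
    congr 1
    rw [show (st6s t)^α = (st6s t)^(1 + -(1-α)) by ring_nf,
      Real.rpow_add hs0, Real.rpow_one]
  have hB : (1 - st6s t) * (-Real.log (1 - st6s t)) ≤ 2 * st6s t := by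
    have h1 := neg_log_one_sub_le hs0 hs2
    have h3 : 0 ≤ -Real.log (1 - st6s t) := by linarith
    nlinarith
  have hst : (st6s t)^α ≤ 2 * t^α := by
    have h1 : (st6s t)^α ≤ (2*t)^α :=
      Real.rpow_le_rpow hs0.le (st6s_le_two_t ht) (le_of_lt hα.1)
    rw [Real.mul_rpow (by norm_num) ht.1.le] at h1
    have h2 : (2:ℝ)^α ≤ 2 := by
      calc (2:ℝ)^α ≤ (2:ℝ)^(1:ℝ) :=
        Real.rpow_le_rpow_of_exponent_le one_le_two hα.2.le
      _ = 2 := Real.rpow_one 2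
    have hta : (0:ℝ) ≤ t^α := (Real.rpow_pos_of_pos ht.1 α).le
    nlinarith
  have htt : t ≤ t^α := by
    have := Real.rpow_le_rpow_of_exponent_ge ht.1 (le_trans ht.2 (by norm_num)) hα.2.le
    rwa [Real.rpow_one] at this
  rw [abs_of_nonneg hnn, hgeq]
  rw [div_le_iff₀ hl2]  -- maybe wrong direction; target C/log2*t^α
  have hs2t := st6s_le_two_t ht
  have goal2 : st6s t * (-Real.log (st6s t)) + (1 - st6s t) * (-Real.log (1 - st6s t))
      ≤ 6/(1-α) * t^α := by
    have e1 : (st6s t)^α/(1-α) ≤ 2*t^α/(1-α) := by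
      apply div_le_div_of_nonneg_right hst h1α.le
    have e2 : 2 * st6s t ≤ 4 * t^α := by nlinarith
    have hta : (0:ℝ) ≤ t^α := (Real.rpow_pos_of_pos ht.1 α).le
    have e3 : 2/(1-α) + 4 ≤ 6/(1-α) := by
      have h4 : (4:ℝ) ≤ 4/(1-α) := by
        rw [le_div_iff₀ h1α]; nlinarith [hα.1]
      have h5 : 2/(1-α) + 4/(1-α) = 6/(1-α) := by ring
      linarith
    have e4 := mul_le_mul_of_nonneg_right e3 hta
    have expand : 2*t^α/(1-α) + 4*t^α = (2/(1-α)+4)*t^α := by ring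
    linarith
  calc st6s t * (-Real.log (st6s t)) + (1 - st6s t) * (-Real.log (1 - st6s t))
      ≤ 6/(1-α) * t^α := goal2
    _ = 6/(1-α) / Real.log 2 * t^α * Real.log 2 := by field_simp

lemma st6L_nonneg {u : ℝ} (h0 : 0 ≤ u) (h1 : u < 1) : 0 ≤ st6L u := by
  have := st6L_ge h0 h1; linarith

lemma st6L_le_neg_log {t : ℝ} (ht : t ∈ Set.Ioc (0:ℝ) (1/4)) (hlt : t < 1/4) :
    st6L (st6u t) ≤ -Real.log t := by
  have hu0 := st6u_pos hlt
  have hu1 := st6u_lt_one ht.1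
  have h1 : Real.log (1 + st6u t) ≤ Real.log 2 :=
    Real.log_le_log (by linarith) (by linarith)
  have h2 : Real.log (2*t) ≤ Real.log (1 - st6u t) :=
    Real.log_le_log (by linarith [ht.1]) (one_sub_u_ge ht)
  rw [Real.log_mul two_ne_zero (ne_of_gt ht.1)] at h2
  rw [st6L]
  linarith

lemma bound_st6p1 {t : ℝ} (ht : t ∈ Set.Ioc (0:ℝ) (1/4)) :
    |st6p1 t| ≤ (4 - 2*Real.log t)/Real.log 2 := by
  have hl2 := log2_pos
  have hlogt : Real.log t < 0 := Real.log_neg ht.1 (by linarith [ht.2])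
  rcases eq_or_lt_of_le ht.2 with heq | hlt
  · rw [heq] at hlogt ⊢
    rw [st6p1_quarter, abs_of_nonneg (by positivity)]
    apply div_le_div_of_nonneg_right _ hl2.le
    linarith
  have hu0 := st6u_pos hlt
  have hu1 := st6u_lt_one ht.1
  have hu2 : st6u t ^2 = 1 - 4*t := st6u_sq ht.2
  have hL0 : 0 ≤ st6L (st6u t) := st6L_nonneg hu0.le hu1
  have hp1 : st6p1 t = st6L (st6u t)/(st6u t)/Real.log 2 := by
    rw [st6p1, if_neg (ne_of_lt hlt), div_div]
  rw [hp1, abs_of_nonneg (by positivity)]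
  apply div_le_div_of_nonneg_right _ hl2.le
  -- L/u ≤ 4 - 2 log t
  rcases le_or_gt (1/2 : ℝ) (st6u t) with hcase | hcase
  · have h1 := st6L_le_neg_log ht hlt
    rw [div_le_iff₀ hu0]
    nlinarith
  · have h1 := st6L_le hu0.le hu1
    have h2 : st6L (st6u t)/st6u t ≤ 2/(1 - st6u t^2) := by
      rw [div_le_div_iff₀ hu0 (by nlinarith)]
      calc st6L (st6u t) * (1 - st6u t^2) ≤ (2*st6u t/(1-st6u t^2)) * (1 - st6u t^2) :=
            mul_le_mul_of_nonneg_right h1 (by nlinarith)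
        _ = 2 * st6u t := div_mul_cancel₀ _ (by nlinarith)
    have h3 : 2/(1 - st6u t^2) = 1/(2*t) := by rw [hu2]; ring
    have h4 : 1/(2*t) ≤ 8/3 := by
      rw [div_le_div_iff₀ (by linarith [ht.1]) (by norm_num)]
      nlinarith
    linarith

lemma bound_st6p2 {t : ℝ} (ht : t ∈ Set.Ioc (0:ℝ) (1/4)) :
    |st6p2 t| ≤ 12/(t * Real.log 2) := by
  have hl2 := log2_pos
  rcases eq_or_lt_of_le ht.2 with heq | hlt
  · rw [heq, st6p2_quarter]
    rw [abs_neg, abs_of_nonneg (by positivity)]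
    rw [div_le_div_iff₀ (by positivity) (by rw [← heq]; positivity)]
    rw [← heq]  -- put t back? messy; redo below
    nlinarith [hl2]
  · have hu0 := st6u_pos hlt
    have hu1 := st6u_lt_one ht.1
    have hu2 : st6u t ^2 = 1 - 4*t := st6u_sq ht.2
    have h4t : 1 - st6u t^2 = 4*t := by rw [hu2]; ring
    have hXle : st6L (st6u t) - 2*st6u t/(1 - st6u t^2) ≤ 0 := by
      have := st6L_le hu0.le hu1
      linarith
    have hXge : -(2*st6u t^3/(1 - st6u t^2)) ≤ st6L (st6u t) - 2*st6u t/(1 - st6u t^2) := by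
      have h1 := st6L_ge hu0.le hu1
      have hpos : (0:ℝ) < 1 - st6u t^2 := by nlinarith
      have hid : 2*st6u t - 2*st6u t/(1 - st6u t^2) = -(2*st6u t^3/(1 - st6u t^2)) := by
        field_simp
        ring
      linarith [hid ▸ (by linarith : 2*st6u t - 2*st6u t/(1 - st6u t^2)
        ≤ st6L (st6u t) - 2*st6u t/(1 - st6u t^2))]
    have habs : |st6L (st6u t) - 2*st6u t/(1 - st6u t^2)| ≤ 2*st6u t^3/(1 - st6u t^2) :=
      abs_le.mpr ⟨hXge, by
        have hpos : (0:ℝ) < 1 - st6u t^2 := by nlinarith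
        have : (0:ℝ) ≤ 2*st6u t^3/(1 - st6u t^2) := by positivity
        linarith⟩
    rw [st6p2, if_neg (ne_of_lt hlt)]
    rw [abs_div, abs_of_nonneg (mul_nonneg (pow_nonneg (st6u_nonneg t) 3) hl2.le)]
    rw [abs_mul, abs_of_nonneg (by norm_num : (0:ℝ) ≤ (2:ℝ))]
    have hpos : (0:ℝ) < 1 - st6u t^2 := by nlinarith
    have hden : (0:ℝ) < st6u t^3 * Real.log 2 := mul_pos (pow_pos hu0 3) hl2
    rw [div_le_div_iff₀ hden (mul_pos ht.1 hl2)]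
    calc 2 * |st6L (st6u t) - 2*st6u t/(1 - st6u t^2)| * (t * Real.log 2)
        ≤ 2 * (2*st6u t^3/(1 - st6u t^2)) * (t * Real.log 2) := by
          have := mul_le_mul_of_nonneg_right
            (mul_le_mul_of_nonneg_left habs (by norm_num : (0:ℝ) ≤ 2))
            (mul_nonneg ht.1.le hl2.le)
          linarith
      _ = (4*t/(1 - st6u t^2)) * (st6u t^3 * Real.log 2) := by
          field_simp
          ring
      _ = 1 * (st6u t^3 * Real.log 2) := by
          rw [h4t, div_self (ne_of_gt (by linarith [ht.1] : (0:ℝ) < 4*t))]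
      _ ≤ 12 * (st6u t^3 * Real.log 2) := by nlinarith [hden]

lemma final_bound {α : ℝ} (hα : α ∈ Set.Ioo (0:ℝ) 1) :
    ∀ k : ℕ, k ≤ 2 → ∀ t ∈ Set.Ioc (0:ℝ) (1/4),
      |iteratedDerivWithin k st6H (Set.Ioc 0 (1/4)) t| * t ^ ((k : ℝ) - α) ≤
        20 / ((1-α) * Real.log 2) := by
  intro k hk t ht
  have ht0 := ht.1
  have ht1 : t ≤ 1 := le_trans ht.2 (by norm_num)
  have hl2 := log2_pos
  have h1α : 0 < 1 - α := by linarith [hα.2]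
  have htpos : (0:ℝ) < t ^ (1 - α) := Real.rpow_pos_of_pos ht0 _
  have ht1a : t ^ (1-α) ≤ 1 := Real.rpow_le_one ht0.le ht1 h1α.le
  have hlogfact : (-Real.log t) * t^(1-α) ≤ 1/(1-α) := by
    have h1 := neg_log_le ht0 h1α
    have h2 := mul_le_mul_of_nonneg_right h1 htpos.le
    refine h2.trans_eq ?_
    rw [div_mul_eq_mul_div]
    rw [show t ^ (-(1 - α)) * t ^ (1-α) = 1 by rw [← Real.rpow_add ht0]; norm_num]
  interval_cases k
  · -- k = 0
    rw [iteratedDerivWithin_zero, st6H_eq_g (Set.Ioc_subset_Icc_self ht)]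
    have hb := bound_st6g hα ht
    have hcast : ((0:ℕ):ℝ) - α = -α := by push_cast; ring
    rw [hcast, Real.rpow_neg ht0.le]
    have hta : (0:ℝ) < t^α := Real.rpow_pos_of_pos ht0 α
    have := mul_le_mul_of_nonneg_right hb (inv_nonneg.mpr hta.le)
    refine this.trans ?_
    rw [mul_assoc, mul_inv_cancel₀ (ne_of_gt hta), mul_one]
    rw [div_div, div_le_div_iff₀ (by positivity) (by positivity)]
    nlinarith
  · -- k = 1
    rw [iter1_st6H ht]
    have hb := bound_st6p1 ht
    have hcast : ((1:ℕ):ℝ) - α = 1-α := by push_cast; ring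
    rw [hcast]
    have hBpos : (0:ℝ) ≤ (4 - 2*Real.log t)/Real.log 2 := le_trans (abs_nonneg _) hb
    have step1 : |st6p1 t| * t^(1-α) ≤ (4 - 2*Real.log t)/Real.log 2 * t^(1-α) :=
      mul_le_mul_of_nonneg_right hb htpos.le
    refine step1.trans ?_
    rw [div_mul_eq_mul_div, div_le_div_iff₀ hl2 (by positivity)]
    have expand : (4 - 2*Real.log t) * t^(1-α)
        = 4*t^(1-α) + 2*((-Real.log t) * t^(1-α)) := by ring
    have key : (4 - 2*Real.log t) * t^(1-α) ≤ 4 + 2/(1-α) := by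
      rw [expand]
      have h4 : 4*t^(1-α) ≤ 4 := by linarith
      have h5 : 2*((-Real.log t) * t^(1-α)) ≤ 2*(1/(1-α)) :=
        mul_le_mul_of_nonneg_left hlogfact (by norm_num)
      have : 2*(1/(1-α)) = 2/(1-α) := by ring
      linarith
    have hmul := mul_le_mul_of_nonneg_right key
      (by positivity : (0:ℝ) ≤ (1-α)*Real.log 2)
    have hexp : (4 + 2/(1-α)) * ((1-α)*Real.log 2) = (4*(1-α) + 2)*Real.log 2 := by
      field_simp
    have hle : (4*(1-α) + 2)*Real.log 2 ≤ 20 * Real.log 2 := by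
      apply mul_le_mul_of_nonneg_right _ hl2.le
      nlinarith [hα.1, hα.2]
    linarith
  · -- k = 2
    rw [iter2_st6H ht]
    have hb := bound_st6p2 ht
    have hcast : ((2:ℕ):ℝ) - α = 1 + (1-α) := by push_cast; ring
    rw [hcast, Real.rpow_add ht0, Real.rpow_one]
    have step1 : |st6p2 t| * (t * t^(1-α)) ≤ 12/(t*Real.log 2) * (t * t^(1-α)) :=
      mul_le_mul_of_nonneg_right hb (by positivity)
    refine step1.trans ?_
    have hid : 12/(t*Real.log 2) * (t * t^(1-α)) = 12 * t^(1-α)/Real.log 2 := by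
      field_simp
    rw [hid]
    rw [div_le_div_iff₀ hl2 (by positivity)]
    have h12 : 12 * t^(1-α) * ((1-α)*Real.log 2) ≤ 12 * ((1-α)*Real.log 2) := by
      nlinarith [htpos.le, ht1a, hl2, h1α, mul_pos h1α hl2]
    have hfin : 12*((1-α)*Real.log 2) ≤ 20*Real.log 2 := by nlinarith [hα.1, hα.2, hl2]
    linarith

end St6Aux

/-- For every `α ∈ (0,1)` the function `h₀` (extended by `0` outside
`[0,1/4]`) satisfies the derivative bounds
`max_{k≤2} sup_{t∈(0,1/4]} |h₀^{(k)}(t)| t^{k−α} < ∞`; in particular `h₀` satisfies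
Condition 1 with exponent `α`. -/
theorem statement6 :
    ∀ h h0 : ℝ → ℝ,
      (∀ t, h t = -t * Real.logb 2 t - (1 - t) * Real.logb 2 (1 - t)) →
      (∀ t, h0 t = if t ∈ Set.Icc (0:ℝ) (1/4)
        then h ((1 - Real.sqrt (1 - 4 * t)) / 2) else 0) →
      ∀ α : ℝ, α ∈ Set.Ioo (0:ℝ) 1 →
        (∃ C : ℝ, ∀ k : ℕ, k ≤ 2 → ∀ t ∈ Set.Ioc (0:ℝ) (1/4),
          |iteratedDerivWithin k h0 (Set.Ioc 0 (1/4)) t| * t ^ ((k : ℝ) - α) ≤ C) ∧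
        Condition1 h0 α := by
  intro h h0 hh hh0 α hα
  have hfun : h0 = st6H := by
    funext t
    rw [hh0 t, hh]
    rfl
  rw [hfun]
  refine ⟨⟨20 / ((1-α) * Real.log 2), final_bound hα⟩,
    ⟨⟨hα.1, hα.2.le⟩, fun x hx => if_neg hx, contDiffOn_st6H,
      ⟨20 / ((1-α) * Real.log 2), final_bound hα⟩⟩⟩

end
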